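/- Let p be prime, 0 ≠ E ∈ F_p[x,y], and f, g ∈ F_p[[x]] with f ≠ g and E(x, f(x)) = E(x, g(x)) = 0. Then there exists n ≤ (d+1)(p^d − d + 1)·deg_x E, where d = deg_y E, such that the coefficients of x^n in f and g differ. -/

import Mathlib

open PowerSeries

/-- Substitution of `x^q` into a formal power series: `(psub q z)(x) = z(x^q)`. -/
noncomputable def psub {R : Type*} [Semiring R] (q : ℕ) (z : PowerSeries R) : PowerSeries R :=
  PowerSeries.mk fun n => if q ∣ n then PowerSeries.coeff (R := R) (n / q) z else 0

/-- The section operator `S_r` : sends `Σ z_n x^n` to `Σ z_{pn+r} x^n`. -/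
noncomputable def sect {R : Type*} [Semiring R] (p r : ℕ) (z : PowerSeries R) : PowerSeries R :=
  PowerSeries.mk fun n => PowerSeries.coeff (R := R) (p * n + r) z

/-- The `x`-degree of a polynomial `E ∈ R[x][y]` (outer variable is `y`). -/
noncomputable def degX {R : Type*} [CommSemiring R] (E : Polynomial (Polynomial R)) : ℕ :=
  E.support.sup fun n => (E.coeff n).natDegree


namespace RootsAux
open Polynomial

variable {K : Type*} [CommRing K]

lemma coeff_natDegree_le_degX (A : Polynomial (Polynomial K)) (i : ℕ) :
    (A.coeff i).natDegree ≤ degX A := by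
  unfold degX
  rcases eq_or_ne (A.coeff i) 0 with h | h
  · simp [h]
  · exact Finset.le_sup (f := fun n => (A.coeff n).natDegree) (Polynomial.mem_support_iff.mpr h)

lemma degX_le {A : Polynomial (Polynomial K)} {m : ℕ}
    (h : ∀ i, (A.coeff i).natDegree ≤ m) : degX A ≤ m := by
  unfold degX; exact Finset.sup_le fun i _ => h i

lemma degX_mul_le (A B : Polynomial (Polynomial K)) :
    degX (A * B) ≤ degX A + degX B := by
  apply degX_le
  intro k
  rw [Polynomial.coeff_mul]
  apply Polynomial.natDegree_sum_le_of_forall_le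
  intro x _
  exact le_trans (Polynomial.natDegree_mul_le)
    (add_le_add (coeff_natDegree_le_degX A _) (coeff_natDegree_le_degX B _))

lemma degX_sub_le (A B : Polynomial (Polynomial K)) :
    degX (A - B) ≤ max (degX A) (degX B) := by
  apply degX_le
  intro i
  rw [Polynomial.coeff_sub]
  exact le_trans (Polynomial.natDegree_sub_le _ _)
    (max_le_max (coeff_natDegree_le_degX A i) (coeff_natDegree_le_degX B i))

lemma degX_C_le (c : Polynomial K) : degX (Polynomial.C c) ≤ c.natDegree := by
  apply degX_le
  intro i
  rw [Polynomial.coeff_C]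
  split <;> simp

lemma degX_X_pow_le (k : ℕ) : degX ((Polynomial.X : Polynomial (Polynomial K)) ^ k) ≤ 0 := by
  apply degX_le
  intro i
  rw [Polynomial.coeff_X_pow]
  split <;> simp

lemma degX_sum_le {ι : Type*} (s : Finset ι) (f : ι → Polynomial (Polynomial K)) (m : ℕ)
    (h : ∀ i ∈ s, degX (f i) ≤ m) : degX (∑ i ∈ s, f i) ≤ m := by
  apply degX_le
  intro k
  rw [Polynomial.finset_sum_coeff]
  apply Polynomial.natDegree_sum_le_of_forall_le
  intro x hx
  exact le_trans (coeff_natDegree_le_degX (f x) k) (h x hx)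

section Reduce
variable [Nontrivial K]

lemma reduce_aux (E : Polynomial (Polynomial K)) (hd : 1 ≤ E.natDegree) :
    ∀ n : ℕ, ∀ P : Polynomial (Polynomial K), P.natDegree ≤ n →
    ∃ q r : Polynomial (Polynomial K),
      (Polynomial.C E.leadingCoeff) ^ (P.natDegree + 1 - E.natDegree) * P = q * E + r ∧
      r.natDegree < E.natDegree ∧
      degX r ≤ degX P + (P.natDegree + 1 - E.natDegree) * degX E := by
  intro n
  induction n with
  | zero =>
    intro P hP
    refine ⟨0, P, ?_, ?_, ?_⟩
    · have : P.natDegree + 1 - E.natDegree = 0 := by omega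
      rw [this]; ring
    · omega
    · have : P.natDegree + 1 - E.natDegree = 0 := by omega
      simp [this]
  | succ n ih =>
    intro P hP
    by_cases hlt : P.natDegree < E.natDegree
    · refine ⟨0, P, ?_, hlt, ?_⟩
      · have : P.natDegree + 1 - E.natDegree = 0 := by omega
        rw [this]; ring
      · have : P.natDegree + 1 - E.natDegree = 0 := by omega
        simp [this]
    · push_neg at hlt
      set d := E.natDegree with hdd
      set a := E.leadingCoeff with ha
      set nP := P.natDegree with hnP
      set c := P.coeff nP with hc
      set P' := Polynomial.C a * P - Polynomial.C c * Polynomial.X ^ (nP - d) * E with hP'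
      -- degree of P' is < nP
      have hd1 : (Polynomial.C a * P).natDegree ≤ nP := by
        refine le_trans (Polynomial.natDegree_mul_le) ?_
        simp [Polynomial.natDegree_C, hnP]
      have hd2 : (Polynomial.C c * Polynomial.X ^ (nP - d) * E).natDegree ≤ nP := by
        refine le_trans (Polynomial.natDegree_mul_le) ?_
        refine le_trans (add_le_add_left Polynomial.natDegree_mul_le _) ?_
        simp only [Polynomial.natDegree_C, Polynomial.natDegree_X_pow, zero_add]
        omega
      have hEd : E.coeff d = a := Polynomial.coeff_natDegree
      have he1 : (Polynomial.C c * Polynomial.X ^ (nP - d) * E).coeff nP = c * E.coeff d := by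
        rw [mul_assoc, Polynomial.coeff_C_mul]
        congr 1
        have hxp := Polynomial.coeff_X_pow_mul E (nP - d) d
        rw [← hxp]
        congr 1
        omega
      have hcoeff : P'.coeff nP = 0 := by
        rw [hP', Polynomial.coeff_sub, Polynomial.coeff_C_mul, he1, hEd, mul_comm, sub_self]
      have hP'lt : P'.natDegree < nP := by
        rcases eq_or_ne P' 0 with h0 | h0
        · rw [h0, Polynomial.natDegree_zero]; omega
        · have hle : P'.natDegree ≤ nP :=
            le_trans (Polynomial.natDegree_sub_le _ _) (max_le hd1 hd2)
          exact lt_of_le_of_ne hle fun hEq => h0 (Polynomial.leadingCoeff_eq_zero.mp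
            (by rw [Polynomial.leadingCoeff, hEq]; exact hcoeff))
      have hadX : a.natDegree ≤ degX E := by
        rw [ha, Polynomial.leadingCoeff]
        exact coeff_natDegree_le_degX E d
      have hP'degX : degX P' ≤ degX P + degX E := by
        rw [hP']
        refine le_trans (degX_sub_le _ _) (max_le ?_ ?_)
        · refine le_trans (degX_mul_le _ _) ?_
          have : degX (Polynomial.C a) ≤ degX E := le_trans (degX_C_le a) hadX
          omega
        · refine le_trans (degX_mul_le _ _) ?_
          have h1 : degX (Polynomial.C c * Polynomial.X ^ (nP - d)) ≤ degX P := by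
            refine le_trans (degX_mul_le _ _) ?_
            have h2 : degX (Polynomial.C c) ≤ degX P := le_trans (degX_C_le c) (coeff_natDegree_le_degX P nP)
            have h3 : degX ((Polynomial.X : Polynomial (Polynomial K)) ^ (nP - d)) ≤ 0 := degX_X_pow_le _
            omega
          omega
      obtain ⟨q', r', heq', hr1, hr2⟩ := ih P' (by omega)
      set e' := P'.natDegree + 1 - d with he'd
      set k := nP - d - e' with hkd
      refine ⟨(Polynomial.C a) ^ (nP - d) * (Polynomial.C c * Polynomial.X ^ (nP - d)) + (Polynomial.C a) ^ k * q', (Polynomial.C a) ^ k * r', ?_, ?_, ?_⟩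
      · have hpow1 : (Polynomial.C a : Polynomial (Polynomial K)) ^ (nP + 1 - d) = (Polynomial.C a) ^ (nP - d) * Polynomial.C a := by
          rw [← pow_succ]
          congr 1
          omega
        have hpow2 : ((Polynomial.C a : Polynomial (Polynomial K))) ^ (nP - d) = (Polynomial.C a) ^ k * (Polynomial.C a) ^ e' := by
          rw [← pow_add]
          congr 1
          omega
        calc (Polynomial.C a) ^ (nP + 1 - d) * P = (Polynomial.C a) ^ (nP - d) * (Polynomial.C a * P) := by rw [hpow1]; ring
          _ = (Polynomial.C a) ^ (nP - d) * (P' + Polynomial.C c * Polynomial.X ^ (nP - d) * E) := by rw [hP']; ring_nf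
          _ = (Polynomial.C a) ^ k * ((Polynomial.C a) ^ e' * P') + ((Polynomial.C a) ^ (nP - d) * (Polynomial.C c * Polynomial.X ^ (nP - d))) * E := by
              rw [hpow2]; ring
          _ = (Polynomial.C a) ^ k * (q' * E + r') + ((Polynomial.C a) ^ (nP - d) * (Polynomial.C c * Polynomial.X ^ (nP - d))) * E := by
              rw [heq']
          _ = ((Polynomial.C a) ^ (nP - d) * (Polynomial.C c * Polynomial.X ^ (nP - d)) + (Polynomial.C a) ^ k * q') * E + (Polynomial.C a) ^ k * r' := by
              ring
      · have h0 : ((Polynomial.C a : Polynomial (Polynomial K)) ^ k).natDegree = 0 := by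
          rw [← map_pow]; exact Polynomial.natDegree_C _
        have := Polynomial.natDegree_mul_le (p := (Polynomial.C a : Polynomial (Polynomial K)) ^ k) (q := r')
        omega
      · have h0 : degX ((Polynomial.C a : Polynomial (Polynomial K)) ^ k) ≤ k * degX E := by
          rw [← map_pow]
          refine le_trans (degX_C_le _) (le_trans (Polynomial.natDegree_pow_le) ?_)
          exact Nat.mul_le_mul_left k hadX
        have hchain : degX ((Polynomial.C a) ^ k * r') ≤ k * degX E + degX r' :=
          le_trans (degX_mul_le _ _) (add_le_add_left h0 _)
        have harr : k * degX E + (degX P + degX E + e' * degX E)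
            = degX P + (nP + 1 - d) * degX E := by
          have h1 : nP + 1 - d = k + e' + 1 := by omega
          rw [h1]; ring
        have : degX r' ≤ degX P + degX E + e' * degX E := by omega
        omega

end Reduce

section Comb
variable {K : Type*} [Field K] [Fintype K] [DecidableEq K]

lemma exists_combination (d B : ℕ) (hd : 1 ≤ d)
    (s : Fin (d + 1) → Polynomial (Polynomial K))
    (hsd : ∀ j, (s j).natDegree < d) (hsX : ∀ j, degX (s j) ≤ B) :
    ∃ c : Fin (d + 1) → Polynomial K, (∃ j, c j ≠ 0) ∧ (∀ j, (c j).natDegree ≤ d * B) ∧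
      ∑ j, Polynomial.C (c j) * s j = 0 := by
  classical
  set D := d * B with hD
  set toPoly : (Fin (D + 1) → K) → Polynomial K :=
    fun w => ∑ i : Fin (D + 1), Polynomial.monomial (i : ℕ) (w i) with htoPoly
  have htP_coeff : ∀ (w : Fin (D + 1) → K) (i : Fin (D + 1)), (toPoly w).coeff (i : ℕ) = w i := by
    intro w i
    rw [htoPoly]
    simp only
    rw [Polynomial.finset_sum_coeff, Finset.sum_eq_single i]
    · rw [Polynomial.coeff_monomial, if_pos rfl]
    · intro i' _ hne
      rw [Polynomial.coeff_monomial, if_neg (fun h => hne (Fin.ext h))]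
    · intro h
      exact absurd (Finset.mem_univ i) h
  have htP_deg : ∀ (w : Fin (D + 1) → K), (toPoly w).natDegree ≤ D := by
    intro w
    apply Polynomial.natDegree_sum_le_of_forall_le
    intro i _
    exact le_trans (Polynomial.natDegree_monomial_le _) (by omega)
  set Φ : (Fin (d + 1) → Fin (D + 1) → K) → (Fin d → Fin (D + B + 1) → K) :=
    fun v i m => (((∑ j, Polynomial.C (toPoly (v j)) * s j).coeff (i : ℕ)).coeff (m : ℕ)) with hΦdef
  have hcard : Fintype.card (Fin d → Fin (D + B + 1) → K)
      < Fintype.card (Fin (d + 1) → Fin (D + 1) → K) := by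
    rw [Fintype.card_fun, Fintype.card_fun, Fintype.card_fun, Fintype.card_fun]
    simp only [Fintype.card_fin]
    rw [← pow_mul, ← pow_mul]
    apply Nat.pow_lt_pow_right Fintype.one_lt_card
    have key : (D + B + 1) * d + 1 = (D + 1) * (d + 1) := by rw [hD]; ring
    omega
  obtain ⟨v, v', hne, hΦeq⟩ := Fintype.exists_ne_map_eq_of_card_lt Φ hcard
  set c : Fin (d + 1) → Polynomial K := fun j => toPoly (v j) - toPoly (v' j) with hcdef
  have hcd : ∀ j, (c j).natDegree ≤ D := by
    intro j
    exact le_trans (Polynomial.natDegree_sub_le _ _) (max_le (htP_deg _) (htP_deg _))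
  set Z := ∑ j, Polynomial.C (c j) * s j with hZ
  have hZsub : Z = (∑ j, Polynomial.C (toPoly (v j)) * s j) - ∑ j, Polynomial.C (toPoly (v' j)) * s j := by
    rw [hZ, ← Finset.sum_sub_distrib]
    apply Finset.sum_congr rfl
    intro j _
    rw [hcdef]
    simp only
    rw [map_sub, sub_mul]
  have hZdeg : Z.natDegree < d := by
    have : Z.natDegree ≤ d - 1 := by
      apply Polynomial.natDegree_sum_le_of_forall_le
      intro j _
      refine le_trans Polynomial.natDegree_mul_le ?_
      have := hsd j
      simp only [Polynomial.natDegree_C, zero_add]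
      omega
    omega
  have hZdegX : degX Z ≤ D + B := by
    apply degX_sum_le
    intro j _
    refine le_trans (degX_mul_le _ _) ?_
    have h1 : degX (Polynomial.C (c j)) ≤ D := le_trans (degX_C_le _) (hcd j)
    have h2 := hsX j
    omega
  have hZzero : Z = 0 := by
    ext i m
    rw [Polynomial.coeff_zero]
    show (Z.coeff i).coeff m = (0 : Polynomial K).coeff m
    rw [Polynomial.coeff_zero]
    by_cases hi : i < d
    · by_cases hm : m < D + B + 1
      · have := congrFun (congrFun hΦeq ⟨i, hi⟩) ⟨m, hm⟩
        rw [hΦdef] at this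
        simp only at this
        rw [hZsub, Polynomial.coeff_sub, Polynomial.coeff_sub]
        exact sub_eq_zero_of_eq this
      · apply Polynomial.coeff_eq_zero_of_natDegree_lt
        have : (Z.coeff i).natDegree ≤ D + B := le_trans (coeff_natDegree_le_degX Z i) hZdegX
        omega
    · rw [Polynomial.coeff_eq_zero_of_natDegree_lt (p := Z) (by omega), Polynomial.coeff_zero]
  refine ⟨c, ?_, fun j => le_trans (hcd j) (by omega), by rw [← hZ, hZzero]⟩
  rw [Function.ne_iff] at hne
  obtain ⟨j, hj⟩ := hne
  rw [Function.ne_iff] at hj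
  obtain ⟨i, hi⟩ := hj
  refine ⟨j, fun h0 => hi ?_⟩
  have : (c j).coeff (i : ℕ) = v j i - v' j i := by
    rw [hcdef]
    simp only
    rw [Polynomial.coeff_sub, htP_coeff, htP_coeff]
  rw [h0, Polynomial.coeff_zero] at this
  have := sub_eq_zero.mp this.symm
  exact this

end Comb


section PS
variable {K : Type*} [CommRing K]

lemma coeff_mul_low (A B : PowerSeries K) (a b n : ℕ)
    (hA : ∀ i < a, PowerSeries.coeff (R := K) i A = 0) (hB : ∀ i < b, PowerSeries.coeff (R := K) i B = 0)
    (hn : n < a + b) : PowerSeries.coeff (R := K) n (A * B) = 0 := by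
  rw [PowerSeries.coeff_mul]
  apply Finset.sum_eq_zero
  intro x hx
  rw [Finset.HasAntidiagonal.mem_antidiagonal] at hx
  by_cases hxa : x.1 < a
  · rw [hA _ hxa, zero_mul]
  · rw [hB _ (by omega), mul_zero]

lemma coeff_mul_ord (A B : PowerSeries K) (a b : ℕ)
    (hA : ∀ i < a, PowerSeries.coeff (R := K) i A = 0) (hB : ∀ i < b, PowerSeries.coeff (R := K) i B = 0) :
    PowerSeries.coeff (R := K) (a + b) (A * B) = PowerSeries.coeff (R := K) a A * PowerSeries.coeff (R := K) b B := by
  rw [PowerSeries.coeff_mul, Finset.sum_eq_single (a, b)]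
  · intro x hx hne
    rw [Finset.HasAntidiagonal.mem_antidiagonal] at hx
    by_cases hxa : x.1 < a
    · rw [hA _ hxa, zero_mul]
    · rcases eq_or_ne x.1 a with h1 | h1
      · have h2 : x.2 = b := by omega
        exact absurd (Prod.ext h1 h2) hne
      · rw [hB x.2 (by omega), mul_zero]
  · intro hmem
    exact absurd (Finset.HasAntidiagonal.mem_antidiagonal.mpr (rfl : (a, b).1 + (a, b).2 = a + b)) hmem

lemma coeff_pow_low (D : PowerSeries K) (v : ℕ)
    (hmin : ∀ i < v, PowerSeries.coeff (R := K) i D = 0) (q : ℕ) :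
    (∀ n < q * v, PowerSeries.coeff (R := K) n (D ^ q) = 0) ∧
    PowerSeries.coeff (R := K) (q * v) (D ^ q) = (PowerSeries.coeff (R := K) v D) ^ q := by
  induction q with
  | zero =>
    constructor
    · intro n hn; omega
    · simp
  | succ q ih =>
    have harith : (q + 1) * v = q * v + v := by ring
    constructor
    · intro n hn
      rw [pow_succ]
      exact coeff_mul_low _ _ (q * v) v n ih.1 hmin (by omega)
    · rw [pow_succ, harith, coeff_mul_ord _ _ _ _ ih.1 hmin, ih.2, pow_succ]

end PS

end RootsAux

/-- Corollary G: if `E ∈ F_p[x,y]` is nonzero and `f ≠ g` are power series roots of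
`E(x,y) = 0`, then `f` and `g` differ in some coefficient of index
`n ≤ (d+1)(p^d − d + 1)·deg_x E`, where `d = deg_y E`. -/
theorem roots_differ_early (p : ℕ) (hp : p.Prime)
    (E : Polynomial (Polynomial (ZMod p))) (hE : E ≠ 0)
    (f g : PowerSeries (ZMod p)) (hfg : f ≠ g)
    (hf : Polynomial.eval₂ ((Polynomial.coeToPowerSeries.ringHom : Polynomial (ZMod p) →+* PowerSeries (ZMod p))) f E = 0)
    (hg : Polynomial.eval₂ ((Polynomial.coeToPowerSeries.ringHom : Polynomial (ZMod p) →+* PowerSeries (ZMod p))) g E = 0) :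
    ∃ n ≤ (E.natDegree + 1) * (p ^ E.natDegree - E.natDegree + 1) * degX E,
      PowerSeries.coeff (R := ZMod p) n f ≠ PowerSeries.coeff (R := ZMod p) n g := by
  classical
  haveI : Fact p.Prime := ⟨hp⟩
  open Polynomial RootsAux in
  set φ := (Polynomial.coeToPowerSeries.ringHom : Polynomial (ZMod p) →+* PowerSeries (ZMod p))
    with hφdef
  have hφcoeff : ∀ (c : Polynomial (ZMod p)) (n : ℕ),
      PowerSeries.coeff (R := ZMod p) n (φ c) = c.coeff n := by
    intro c n
    rw [hφdef, Polynomial.coeToPowerSeries.ringHom_apply]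
    exact Polynomial.coeff_coe c n
  have hφinj : ∀ c, φ c = 0 → c = 0 := by
    intro c h
    ext n
    rw [← hφcoeff c n, h, map_zero, Polynomial.coeff_zero]
  set d := E.natDegree with hddef
  have hd : 1 ≤ d := by
    by_contra hcon
    push_neg at hcon
    have hd0 : E.natDegree = 0 := by omega
    have hc0 : E = Polynomial.C (E.coeff 0) := Polynomial.eq_C_of_natDegree_eq_zero hd0
    rw [hc0, Polynomial.eval₂_C] at hf
    exact hE (by rw [hc0, hφinj _ hf, map_zero])
  set a := E.leadingCoeff with hadef
  have ha : a ≠ 0 := Polynomial.leadingCoeff_ne_zero.mpr hE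
  have hah : a.natDegree ≤ degX E := by
    rw [hadef, Polynomial.leadingCoeff]
    exact RootsAux.coeff_natDegree_le_degX E d
  set M := p ^ d + 1 - d with hMdef
  have hpd : d < p ^ d := Nat.lt_pow_self (n := d) hp.one_lt
  -- reductions
  have hred : ∀ j : Fin (d + 1), ∃ q' r : Polynomial (Polynomial (ZMod p)),
      (Polynomial.C a) ^ M * Polynomial.X ^ (p ^ (j : ℕ)) = q' * E + r ∧
      r.natDegree < d ∧ degX r ≤ M * degX E := by
    intro j
    obtain ⟨q, r, heq, hr1, hr2⟩ :=
      RootsAux.reduce_aux E hd (p ^ (j : ℕ)) (Polynomial.X ^ (p ^ (j : ℕ)))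
        (le_of_eq (Polynomial.natDegree_X_pow _))
    have hnd : (Polynomial.X ^ (p ^ (j : ℕ)) : Polynomial (Polynomial (ZMod p))).natDegree
        = p ^ (j : ℕ) := Polynomial.natDegree_X_pow _
    rw [hnd] at heq hr2
    have hXX : degX ((Polynomial.X : Polynomial (Polynomial (ZMod p))) ^ (p ^ (j : ℕ))) ≤ 0 :=
      RootsAux.degX_X_pow_le _
    have heM : p ^ (j : ℕ) + 1 - d ≤ M := by
      have hje : (j : ℕ) ≤ d := by omega
      have := Nat.pow_le_pow_right hp.pos hje
      omega
    set e := p ^ (j : ℕ) + 1 - d with hedef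
    refine ⟨(Polynomial.C a) ^ (M - e) * q, (Polynomial.C a) ^ (M - e) * r, ?_, ?_, ?_⟩
    · have hsplit : (Polynomial.C a : Polynomial (Polynomial (ZMod p))) ^ M
          = (Polynomial.C a) ^ (M - e) * (Polynomial.C a) ^ e := by
        rw [← pow_add]
        congr 1
        omega
      calc (Polynomial.C a) ^ M * Polynomial.X ^ (p ^ (j : ℕ))
          = (Polynomial.C a) ^ (M - e) * ((Polynomial.C a) ^ e * Polynomial.X ^ (p ^ (j : ℕ))) := by
            rw [hsplit]; ring
        _ = (Polynomial.C a) ^ (M - e) * (q * E + r) := by rw [heq]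
        _ = (Polynomial.C a) ^ (M - e) * q * E + (Polynomial.C a) ^ (M - e) * r := by ring
    · have h0 : ((Polynomial.C a : Polynomial (Polynomial (ZMod p))) ^ (M - e)).natDegree = 0 := by
        rw [← map_pow]; exact Polynomial.natDegree_C _
      have := Polynomial.natDegree_mul_le
        (p := (Polynomial.C a : Polynomial (Polynomial (ZMod p))) ^ (M - e)) (q := r)
      omega
    · have h0 : degX ((Polynomial.C a : Polynomial (Polynomial (ZMod p))) ^ (M - e))
          ≤ (M - e) * degX E := by
        rw [← map_pow]
        refine le_trans (RootsAux.degX_C_le _) (le_trans (Polynomial.natDegree_pow_le) ?_)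
        exact Nat.mul_le_mul_left _ hah
      have h1 : degX ((Polynomial.C a) ^ (M - e) * r) ≤ (M - e) * degX E + degX r :=
        le_trans (RootsAux.degX_mul_le _ _) (add_le_add_left h0 _)
      have h2 : degX r ≤ e * degX E := by omega
      have h3 : (M - e) * degX E + e * degX E = M * degX E := by
        rw [← add_mul]
        congr 1
        omega
      omega
  choose q' r hqr hr1 hr2 using hred
  obtain ⟨c, ⟨J0, hJ0⟩, hcdeg, hcsum⟩ :=
    RootsAux.exists_combination d (M * degX E) hd r hr1 hr2
  set b : Fin (d + 1) → Polynomial (ZMod p) := fun j => c j * a ^ M with hbdef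
  have hMeq : p ^ d - d + 1 = M := by rw [hMdef]; omega
  rw [hMeq]
  set N := (d + 1) * M * degX E with hNdef
  have hbdeg : ∀ j, (b j).natDegree ≤ N := by
    intro j
    simp only [hbdef]
    have h1 : (a ^ M).natDegree ≤ M * degX E :=
      le_trans (Polynomial.natDegree_pow_le) (Nat.mul_le_mul_left _ hah)
    have h2 := Polynomial.natDegree_mul_le (p := c j) (q := a ^ M)
    have h3 := hcdeg j
    have h4 : d * (M * degX E) + M * degX E = N := by rw [hNdef]; ring
    omega
  have hbne : b J0 ≠ 0 := mul_ne_zero hJ0 (pow_ne_zero _ ha)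
  -- polynomial identity
  have hpolyid : ∑ j, Polynomial.C (b j) * Polynomial.X ^ (p ^ (j : ℕ))
      = (∑ j, Polynomial.C (c j) * q' j) * E := by
    have step1 : ∀ j : Fin (d + 1), Polynomial.C (b j) * Polynomial.X ^ (p ^ (j : ℕ))
        = Polynomial.C (c j) * q' j * E + Polynomial.C (c j) * r j := by
      intro j
      calc Polynomial.C (b j) * Polynomial.X ^ (p ^ (j : ℕ))
          = Polynomial.C (c j) * ((Polynomial.C a) ^ M * Polynomial.X ^ (p ^ (j : ℕ))) := by
            rw [hbdef]
            simp only [map_mul, map_pow]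
            ring
        _ = Polynomial.C (c j) * (q' j * E + r j) := by rw [hqr j]
        _ = Polynomial.C (c j) * q' j * E + Polynomial.C (c j) * r j := by ring
    calc ∑ j, Polynomial.C (b j) * Polynomial.X ^ (p ^ (j : ℕ))
        = ∑ j, (Polynomial.C (c j) * q' j * E + Polynomial.C (c j) * r j) :=
          Finset.sum_congr rfl fun j _ => step1 j
      _ = (∑ j, Polynomial.C (c j) * q' j) * E + ∑ j, Polynomial.C (c j) * r j := by
          rw [Finset.sum_add_distrib, Finset.sum_mul]
      _ = (∑ j, Polynomial.C (c j) * q' j) * E := by rw [hcsum, add_zero]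
  -- evaluate
  have hev : ∀ z : PowerSeries (ZMod p), Polynomial.eval₂ φ z E = 0 →
      ∑ j : Fin (d + 1), φ (b j) * z ^ (p ^ (j : ℕ)) = 0 := by
    intro z hz
    have := congrArg (Polynomial.eval₂ φ z) hpolyid
    rw [Polynomial.eval₂_finset_sum, Polynomial.eval₂_mul, hz, mul_zero] at this
    rw [← this]
    apply Finset.sum_congr rfl
    intro j _
    rw [Polynomial.eval₂_mul, Polynomial.eval₂_C, Polynomial.eval₂_X_pow]
  have hfev := hev f hf
  have hgev := hev g hg
  haveI : CharP (PowerSeries (ZMod p)) p :=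
    charP_of_injective_ringHom (f := (PowerSeries.C (R := ZMod p) : ZMod p →+* PowerSeries (ZMod p)))
      PowerSeries.C_injective p
  set Dps := f - g with hDdef
  have hsub : ∑ j : Fin (d + 1), φ (b j) * Dps ^ (p ^ (j : ℕ)) = 0 := by
    calc ∑ j : Fin (d + 1), φ (b j) * Dps ^ (p ^ (j : ℕ))
        = ∑ j : Fin (d + 1), φ (b j) * (f ^ (p ^ (j : ℕ)) - g ^ (p ^ (j : ℕ))) := by
          apply Finset.sum_congr rfl
          intro j _
          rw [hDdef, sub_pow_char_pow]
      _ = (∑ j : Fin (d + 1), φ (b j) * f ^ (p ^ (j : ℕ)))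
          - ∑ j : Fin (d + 1), φ (b j) * g ^ (p ^ (j : ℕ)) := by
          rw [← Finset.sum_sub_distrib]
          apply Finset.sum_congr rfl
          intro j _
          rw [mul_sub]
      _ = 0 := by rw [hfev, hgev, sub_zero]
  have hDne : Dps ≠ 0 := sub_ne_zero.mpr hfg
  by_contra hcon
  push_neg at hcon
  have hDzero : ∀ n ≤ N, PowerSeries.coeff (R := ZMod p) n Dps = 0 := by
    intro n hn
    rw [hDdef, map_sub, hcon n hn, sub_self]
  have hex : ∃ n, PowerSeries.coeff (R := ZMod p) n Dps ≠ 0 := by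
    by_contra hx
    push_neg at hx
    exact hDne (PowerSeries.ext fun n => by rw [hx n, map_zero])
  set v := Nat.find hex with hvdef
  have hv : PowerSeries.coeff (R := ZMod p) v Dps ≠ 0 := Nat.find_spec hex
  have hvmin : ∀ i < v, PowerSeries.coeff (R := ZMod p) i Dps = 0 := by
    intro i hi
    exact not_not.mp (Nat.find_min hex hi)
  have hNv : N < v := by
    by_contra hle
    push_neg at hle
    exact hv (hDzero v hle)
  -- minimal J
  obtain ⟨J, hJmem, hJmin0⟩ := Finset.exists_min_image
    (Finset.univ.filter (fun j : Fin (d + 1) => b j ≠ 0)) id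
    ⟨J0, by simp [Finset.mem_filter, hbne]⟩
  have hbJ : b J ≠ 0 := by
    have h' := hJmem
    rw [Finset.mem_filter] at h'
    exact h'.2
  have hJmin : ∀ j, b j ≠ 0 → J ≤ j := by
    intro j hj
    exact hJmin0 j (by rw [Finset.mem_filter]; exact ⟨Finset.mem_univ _, hj⟩)
  have hbJex : ∃ n, (b J).coeff n ≠ 0 :=
    ⟨(b J).natDegree, by rw [Polynomial.coeff_natDegree]
                         exact Polynomial.leadingCoeff_ne_zero.mpr hbJ⟩
  set u := Nat.find hbJex with hudef
  have hu : (b J).coeff u ≠ 0 := Nat.find_spec hbJex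
  have humin : ∀ i < u, (b J).coeff i = 0 := fun i hi => not_not.mp (Nat.find_min hbJex hi)
  have huN : u ≤ N := le_trans (Nat.find_min' hbJex (by
    rw [Polynomial.coeff_natDegree]
    exact Polynomial.leadingCoeff_ne_zero.mpr hbJ)) (hbdeg J)
  have hsum0 := congrArg (PowerSeries.coeff (R := ZMod p) (u + p ^ (J : ℕ) * v)) hsub
  rw [map_sum, map_zero] at hsum0
  have hterm : ∀ j : Fin (d + 1), j ≠ J →
      PowerSeries.coeff (R := ZMod p) (u + p ^ (J : ℕ) * v)
        (φ (b j) * Dps ^ (p ^ (j : ℕ))) = 0 := by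
    intro j hj
    rcases eq_or_ne (b j) 0 with h0 | h0
    · rw [h0, map_zero, zero_mul, map_zero]
    · have hJj : (J : ℕ) < (j : ℕ) := by
        have h1 : J ≤ j := hJmin j h0
        have h2 : J ≠ j := fun hh => hj hh.symm
        exact lt_of_le_of_ne h1 (fun hh => h2 (Fin.ext hh))
      have hpow := RootsAux.coeff_pow_low Dps v hvmin (p ^ (j : ℕ))
      have hm : u + p ^ (J : ℕ) * v < 0 + p ^ (j : ℕ) * v := by
        have h1 : p ^ ((J : ℕ) + 1) ≤ p ^ (j : ℕ) := Nat.pow_le_pow_right hp.pos (by omega)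
        have h2 : 1 + p ^ (J : ℕ) ≤ p ^ ((J : ℕ) + 1) := by
          have h3 : 1 ≤ p ^ (J : ℕ) := Nat.one_le_pow _ _ hp.pos
          have h4 : p ^ ((J : ℕ) + 1) = p * p ^ (J : ℕ) := by ring
          have h5 : 2 ≤ p := hp.two_le
          nlinarith
      -- m = u + p^J * v ≤ N + p^J v < v + p^J v = (1+p^J) v ≤ p^(J+1) v ≤ p^j v
        have h6 : (1 + p ^ (J : ℕ)) * v ≤ p ^ ((J : ℕ) + 1) * v := Nat.mul_le_mul_right v h2
        have h7 : p ^ ((J : ℕ) + 1) * v ≤ p ^ (j : ℕ) * v := Nat.mul_le_mul_right v h1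
        have h8 : (1 + p ^ (J : ℕ)) * v = v + p ^ (J : ℕ) * v := by ring
        omega
      exact RootsAux.coeff_mul_low _ _ 0 (p ^ (j : ℕ) * v) (u + p ^ (J : ℕ) * v)
        (by intro i hi; omega) hpow.1 hm
  have hmain : PowerSeries.coeff (R := ZMod p) (u + p ^ (J : ℕ) * v)
      (φ (b J) * Dps ^ (p ^ (J : ℕ))) ≠ 0 := by
    have hA : ∀ i < u, PowerSeries.coeff (R := ZMod p) i (φ (b J)) = 0 := by
      intro i hi
      rw [hφcoeff]
      exact humin i hi
    have hpow := RootsAux.coeff_pow_low Dps v hvmin (p ^ (J : ℕ))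
    rw [RootsAux.coeff_mul_ord _ _ u (p ^ (J : ℕ) * v) hA hpow.1, hφcoeff, hpow.2]
    exact mul_ne_zero hu (pow_ne_zero _ hv)
  rw [Finset.sum_eq_single J (fun j _ hj => hterm j hj)
    (fun habs => absurd (Finset.mem_univ J) habs)] at hsum0
  exact hmain hsum0
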